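/- arXiv:2312.07578 — 7 statements merged into one kernel-verified Lean document; each statement's English description precedes it below -/
import Mathlib

section
/- Let n ∈ ℝ² be a unit vector, a ∈ ℝ², and let G⁺, G⁻ be 2×2 real matrices with G⁺ − G⁻ = a nᵀ. Let μ⁺, μ⁻, λ⁺, λ⁻, P⁺, P⁻ be real numbers, set D^± = (G^± + (G^±)ᵀ)/2 and Π^± = 2 μ^± D^± + (λ^± tr G^± − P^±) I₂. If (Π⁺ − Π⁻) n = 0, then ⟨μ⟩ (a + (a·n) n) + 2 ⟦μ⟧ ⟨D⟩ n + ⟦λ tr G − P⟧ n = 0. -/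
open Matrix

/-- Balance of stresses across the interface: if the jump of the velocity gradient is
`a nᵀ` and the jump of the stress tensor in the normal direction vanishes, then
`⟨μ⟩ (a + (a·n) n) + 2 ⟦μ⟧ ⟨D⟩ n + ⟦λ tr G − P⟧ n = 0`. -/
theorem stress_balance_identity
    (n a : Fin 2 → ℝ) (hn : n ⬝ᵥ n = 1)
    (Gp Gm : Matrix (Fin 2) (Fin 2) ℝ)
    (hjump : Gp - Gm = vecMulVec a n)
    (μp μm lamp lamm Pp Pm : ℝ)
    (Dp Dm Pip Pim : Matrix (Fin 2) (Fin 2) ℝ)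
    (hDp : Dp = (2⁻¹ : ℝ) • (Gp + Gpᵀ))
    (hDm : Dm = (2⁻¹ : ℝ) • (Gm + Gmᵀ))
    (hPip : Pip = (2 * μp) • Dp + (lamp * Gp.trace - Pp) • (1 : Matrix (Fin 2) (Fin 2) ℝ))
    (hPim : Pim = (2 * μm) • Dm + (lamm * Gm.trace - Pm) • (1 : Matrix (Fin 2) (Fin 2) ℝ))
    (hbal : (Pip - Pim).mulVec n = 0) :
    ((μp + μm) / 2) • (a + (a ⬝ᵥ n) • n)
      + (2 * (μp - μm)) • (((2⁻¹ : ℝ) • (Dp + Dm)).mulVec n)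
      + ((lamp * Gp.trace - Pp) - (lamm * Gm.trace - Pm)) • n = 0 := by
  subst hDp hDm hPip hPim
  have hG : ∀ i j, Gp i j = Gm i j + a i * n j := by
    intro i j
    have h := congrFun (congrFun hjump i) j
    simp [vecMulVec, Matrix.sub_apply] at h
    linarith
  have hb0 := congrFun hbal 0
  have hb1 := congrFun hbal 1
  simp [mulVec, dotProduct, Fin.sum_univ_two, trace, diag, Fin.sum_univ_two,
    Matrix.add_apply, Matrix.sub_apply, Matrix.smul_apply, Matrix.one_apply,
    transpose_apply, smul_eq_mul] at hb0 hb1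
  simp only [dotProduct, Fin.sum_univ_two] at hn
  rw [hG 0 0, hG 0 1, hG 1 0, hG 1 1] at hb0 hb1
  funext i
  fin_cases i
  · simp only [mulVec, dotProduct, Fin.sum_univ_two, trace, diag,
      Matrix.add_apply, Matrix.sub_apply, Matrix.smul_apply, Matrix.one_apply,
      transpose_apply, smul_eq_mul, Pi.add_apply, Pi.smul_apply, Pi.zero_apply,
      Fin.mk_zero, Fin.mk_one, Fin.isValue, Matrix.cons_val_zero, Matrix.cons_val_one, Matrix.head_cons]
    rw [hG 0 0, hG 0 1, hG 1 0, hG 1 1]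
    linear_combination hb0 - ((μp + μm) / 2) * a 0 * hn
  · simp only [mulVec, dotProduct, Fin.sum_univ_two, trace, diag,
      Matrix.add_apply, Matrix.sub_apply, Matrix.smul_apply, Matrix.one_apply,
      transpose_apply, smul_eq_mul, Pi.add_apply, Pi.smul_apply, Pi.zero_apply,
      Fin.mk_zero, Fin.mk_one, Fin.isValue, Matrix.cons_val_zero, Matrix.cons_val_one, Matrix.head_cons]
    rw [hG 0 0, hG 0 1, hG 1 0, hG 1 1]
    linear_combination hb1 - ((μp + μm) / 2) * a 1 * hn
end

section
/- Let n ∈ ℝ² be a unit vector, a ∈ ℝ², and let G⁺, G⁻ be 2×2 real matrices with G⁺ − G⁻ = a nᵀ. Let μ⁺, μ⁻, λ⁺, λ⁻, P⁺, P⁻ be real numbers, set D^± = (G^± + (G^±)ᵀ)/2 and Π^± = 2 μ^± D^± + (λ^± tr G^± − P^±) I₂. If (Π⁺ − Π⁻) n = 0, then the jump of the effective flux satisfies ⟦(2μ + λ) tr G − P⟧ = 2 ⟦μ⟧ ( ⟨tr G⟩ − (⟨D⟩ n) · n ). -/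
open Matrix

/-- Jump of the effective viscous flux across the interface:
`⟦(2μ + λ) tr G − P⟧ = 2 ⟦μ⟧ ( ⟨tr G⟩ − (⟨D⟩ n) · n )`. -/
theorem effective_flux_jump
    (n a : Fin 2 → ℝ) (hn : n ⬝ᵥ n = 1)
    (Gp Gm : Matrix (Fin 2) (Fin 2) ℝ)
    (hjump : Gp - Gm = vecMulVec a n)
    (μp μm lamp lamm Pp Pm : ℝ)
    (Dp Dm Pip Pim : Matrix (Fin 2) (Fin 2) ℝ)
    (hDp : Dp = (2⁻¹ : ℝ) • (Gp + Gpᵀ))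
    (hDm : Dm = (2⁻¹ : ℝ) • (Gm + Gmᵀ))
    (hPip : Pip = (2 * μp) • Dp + (lamp * Gp.trace - Pp) • (1 : Matrix (Fin 2) (Fin 2) ℝ))
    (hPim : Pim = (2 * μm) • Dm + (lamm * Gm.trace - Pm) • (1 : Matrix (Fin 2) (Fin 2) ℝ))
    (hbal : (Pip - Pim).mulVec n = 0) :
    ((2 * μp + lamp) * Gp.trace - Pp) - ((2 * μm + lamm) * Gm.trace - Pm)
      = 2 * (μp - μm) *
        ((Gp.trace + Gm.trace) / 2 - (((2⁻¹ : ℝ) • (Dp + Dm)).mulVec n) ⬝ᵥ n) := by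
  have hj : ∀ i j, Gp i j - Gm i j = a i * n j := by
    intro i j
    have := congrFun (congrFun hjump i) j
    simpa [vecMulVec] using this
  have hb : ∀ i, (Pip - Pim).mulVec n i = 0 := fun i => congrFun hbal i
  have hb0 := hb 0
  have hb1 := hb 1
  subst hDp hDm hPip hPim
  simp only [Matrix.mulVec, dotProduct, Fin.sum_univ_two, Matrix.sub_apply,
    Matrix.add_apply, Matrix.smul_apply, Matrix.one_apply, Matrix.transpose_apply,
    Matrix.trace_fin_two, smul_eq_mul, if_pos, if_neg, Fin.zero_eq_one_iff,
    Fin.one_eq_zero_iff, Nat.succ_ne_self, ite_true, ite_false] at hb0 hb1 hn ⊢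
  simp at hb0 hb1
  have h00 := hj 0 0
  have h01 := hj 0 1
  have h10 := hj 1 0
  have h11 := hj 1 1
  linear_combination n 0 * hb0 + n 1 * hb1
    + (μp + μm) * (h00 + h11)
    - (μp + μm) * (n 0 ^ 2 * h00 + n 0 * n 1 * h01 + n 1 * n 0 * h10 + n 1 ^ 2 * h11)
    - ((lamp * (Gp 0 0 + Gp 1 1) - Pp - (lamm * (Gm 0 0 + Gm 1 1) - Pm))
        + (μp + μm) * (a 0 * n 0 + a 1 * n 1)) * hn
end

section
/- Let n ∈ ℝ² be a unit vector, τ = (−n₂, n₁), a ∈ ℝ², and let G⁺, G⁻ be 2×2 real matrices with G⁺ − G⁻ = a nᵀ. Let μ⁺, μ⁻, λ⁺, λ⁻, P⁺, P⁻ be real numbers, set D^± = (G^± + (G^±)ᵀ)/2 and Π^± = 2 μ^± D^± + (λ^± tr G^± − P^±) I₂, and write rot G := G₂₁ − G₁₂. If (Π⁺ − Π⁻) n = 0, then ⟦μ rot G⟧ = ⟦μ⟧ ( ⟨rot G⟩ − 2 (⟨D⟩ n) · τ ). -/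
open Matrix

/-- Jump of the viscosity-weighted vorticity across the interface:
`⟦μ rot G⟧ = ⟦μ⟧ ( ⟨rot G⟩ − 2 (⟨D⟩ n) · τ )`, where `rot G = G₂₁ − G₁₂`. -/
theorem vorticity_jump
    (n τ a : Fin 2 → ℝ) (hn : n ⬝ᵥ n = 1) (hτ : τ = ![-n 1, n 0])
    (Gp Gm : Matrix (Fin 2) (Fin 2) ℝ)
    (hjump : Gp - Gm = vecMulVec a n)
    (μp μm lamp lamm Pp Pm : ℝ)
    (Dp Dm Pip Pim : Matrix (Fin 2) (Fin 2) ℝ)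
    (hDp : Dp = (2⁻¹ : ℝ) • (Gp + Gpᵀ))
    (hDm : Dm = (2⁻¹ : ℝ) • (Gm + Gmᵀ))
    (hPip : Pip = (2 * μp) • Dp + (lamp * Gp.trace - Pp) • (1 : Matrix (Fin 2) (Fin 2) ℝ))
    (hPim : Pim = (2 * μm) • Dm + (lamm * Gm.trace - Pm) • (1 : Matrix (Fin 2) (Fin 2) ℝ))
    (hbal : (Pip - Pim).mulVec n = 0) :
    μp * (Gp 1 0 - Gp 0 1) - μm * (Gm 1 0 - Gm 0 1)
      = (μp - μm) *
        (((Gp 1 0 - Gp 0 1) + (Gm 1 0 - Gm 0 1)) / 2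
          - 2 * ((((2⁻¹ : ℝ) • (Dp + Dm)).mulVec n) ⬝ᵥ τ)) := by
  subst hτ hDp hDm hPip hPim
  have j00 := congr_fun (congr_fun hjump 0) 0
  have j01 := congr_fun (congr_fun hjump 0) 1
  have j10 := congr_fun (congr_fun hjump 1) 0
  have j11 := congr_fun (congr_fun hjump 1) 1
  have b0 := congr_fun hbal 0
  have b1 := congr_fun hbal 1
  simp only [Matrix.sub_apply, vecMulVec_apply] at j00 j01 j10 j11
  simp only [Matrix.mulVec, dotProduct, Fin.sum_univ_two, Matrix.sub_apply, Matrix.add_apply,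
    Matrix.smul_apply, Matrix.one_apply, Matrix.transpose_apply, Matrix.trace_fin_two,
    smul_eq_mul, Pi.zero_apply, if_true, if_false] at b0 b1
  simp only [dotProduct, Fin.sum_univ_two] at hn
  simp only [Matrix.mulVec, dotProduct, Fin.sum_univ_two, Matrix.smul_apply, Matrix.add_apply,
    Matrix.transpose_apply, smul_eq_mul, Matrix.cons_val_zero, Matrix.cons_val_one, Matrix.head_cons]
  norm_num at b0 b1
  linear_combination ((μp + μm) / 2) *
      ((2 * n 0 * n 1) * j00 + (n 1 ^ 2 - n 0 ^ 2 - 1) * j01 +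
        (n 1 ^ 2 - n 0 ^ 2 + 1) * j10 + (-2 * n 0 * n 1) * j11 +
        (-(a 1 * n 0 - a 0 * n 1)) * hn) +
    (-n 1) * b0 + n 0 * b1
end

section
/- Let n ∈ ℝ² be a unit vector, a ∈ ℝ², and let G⁺, G⁻ be 2×2 real matrices with G⁺ − G⁻ = a nᵀ. Let μ⁺, μ⁻, λ⁺, λ⁻, P⁺, P⁻ be real numbers with μ^± ≥ μ̲ > 0 and λ^± ≥ 0, set D^± = (G^± + (G^±)ᵀ)/2 and Π^± = 2 μ^± D^± + (λ^± tr G^± − P^±) I₂, and assume (Π⁺ − Π⁻) n = 0. If J ≥ 0 is such that |μ⁺ − μ⁻| ≤ J, |λ⁺ − λ⁻| ≤ J and |P⁺ − P⁻| ≤ J, then there is a constant C depending only on μ̲ (and not on the matrices, the vectors, or J) such that |a| ≤ C · J · (1 + ‖G⁺‖ + ‖G⁻‖), where ‖·‖ denotes the operator norm. -/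
open Matrix

/-- The Euclidean norm of a vector in the plane. -/
noncomputable def eNorm2 (x : Fin 2 → ℝ) : ℝ := Real.sqrt (x 0 ^ 2 + x 1 ^ 2)

/-- The operator norm (with respect to the Euclidean norm) of a `2×2` real matrix. -/
noncomputable def opNorm2 (M : Matrix (Fin 2) (Fin 2) ℝ) : ℝ :=
  ‖Matrix.toEuclideanCLM (𝕜 := ℝ) M‖

lemma entry_le_opNorm2 (M : Matrix (Fin 2) (Fin 2) ℝ) (i j : Fin 2) : |M i j| ≤ opNorm2 M := by
  have h := (Matrix.toEuclideanCLM (𝕜 := ℝ) M).le_opNorm (EuclideanSpace.single j 1)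
  rw [EuclideanSpace.norm_single, norm_one, mul_one] at h
  have h2 : Matrix.toEuclideanCLM (𝕜 := ℝ) M (EuclideanSpace.single j 1)
      = (WithLp.equiv 2 _).symm (M *ᵥ Pi.single j 1) := by
    rfl
  rw [h2] at h
  refine le_trans ?_ h
  rw [EuclideanSpace.norm_eq]
  have hm : ∀ k, ((WithLp.equiv 2 (Fin 2 → ℝ)).symm (M *ᵥ Pi.single j 1)) k = M k j := by
    intro k
    simp [Matrix.mulVec_single]
  rw [show |M i j| = Real.sqrt ((M i j)^2) from (Real.sqrt_sq_eq_abs _).symm]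
  apply Real.sqrt_le_sqrt
  fin_cases i <;> simp [Fin.sum_univ_two, hm, Real.norm_eq_abs, sq_abs] <;>
    nlinarith [sq_nonneg (M 0 j), sq_nonneg (M 1 j)]

lemma opNorm2_nonneg (M : Matrix (Fin 2) (Fin 2) ℝ) : 0 ≤ opNorm2 M := norm_nonneg _

private lemma eNorm2_le_abs_add (x : Fin 2 → ℝ) : eNorm2 x ≤ |x 0| + |x 1| := by
  rw [eNorm2, show |x 0| + |x 1| = Real.sqrt ((|x 0| + |x 1|) ^ 2) from
    (Real.sqrt_sq (by positivity)).symm]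
  apply Real.sqrt_le_sqrt
  nlinarith [abs_nonneg (x 0), abs_nonneg (x 1), sq_abs (x 0), sq_abs (x 1)]

private lemma mul_abs_le {x y bx by' : ℝ} (hx : |x| ≤ bx) (hy : |y| ≤ by') :
    |x * y| ≤ bx * by' := by
  rw [abs_mul]
  exact mul_le_mul hx hy (abs_nonneg _) ((abs_nonneg x).trans hx)

/-- The jump `a nᵀ` of the velocity gradient across the interface is controlled by the
jumps of the viscosities and the pressure, times `1 +` the size of the velocity gradient. -/
theorem gradient_jump_controlled_by_coefficient_jumps
    (μlo : ℝ) (hμlo : 0 < μlo) :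
    ∃ C : ℝ, 0 < C ∧
      ∀ (n a : Fin 2 → ℝ) (Gp Gm Dp Dm Pip Pim : Matrix (Fin 2) (Fin 2) ℝ)
        (μp μm lamp lamm Pp Pm J : ℝ),
        n ⬝ᵥ n = 1 →
        Gp - Gm = vecMulVec a n →
        μlo ≤ μp → μlo ≤ μm → 0 ≤ lamp → 0 ≤ lamm →
        Dp = (2⁻¹ : ℝ) • (Gp + Gpᵀ) →
        Dm = (2⁻¹ : ℝ) • (Gm + Gmᵀ) →
        Pip = (2 * μp) • Dp + (lamp * Gp.trace - Pp) • (1 : Matrix (Fin 2) (Fin 2) ℝ) →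
        Pim = (2 * μm) • Dm + (lamm * Gm.trace - Pm) • (1 : Matrix (Fin 2) (Fin 2) ℝ) →
        (Pip - Pim).mulVec n = 0 →
        0 ≤ J → |μp - μm| ≤ J → |lamp - lamm| ≤ J → |Pp - Pm| ≤ J →
        eNorm2 a ≤ C * J * (1 + opNorm2 Gp + opNorm2 Gm) := by
  refine ⟨36 / μlo, by positivity, ?_⟩
  intro n a Gp Gm Dp Dm Pip Pim μp μm lamp lamm Pp Pm J
    hn hG hμp hμm hlp hlm hDp hDm hPip hPim hbal hJ hJμ hJl hJP
  have hGp : Gp = Gm + vecMulVec a n := by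
    rw [← hG]; abel
  subst hGp hDp hDm hPip hPim
  have hn' : n 0 * n 0 + n 1 * n 1 = 1 := by simpa [dotProduct, Fin.sum_univ_two] using hn
  set s : ℝ := a 0 * n 0 + a 1 * n 1 with hs
  set Q : Fin 2 → ℝ := fun i =>
    (μp - μm) * ((Gm i 0 + Gm 0 i) * n 0 + (Gm i 1 + Gm 1 i) * n 1)
      + ((lamp - lamm) * (Gm 0 0 + Gm 1 1) - (Pp - Pm)) * n i with hQdef
  -- the key componentwise equation
  have E : ∀ i, μp * a i + (μp + lamp) * s * n i + Q i = 0 := by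
    intro i
    have hb := congrFun hbal i
    simp [Matrix.mulVec, dotProduct, Fin.sum_univ_two, Matrix.sub_apply, Matrix.add_apply,
      Matrix.smul_apply, Matrix.one_apply, Matrix.vecMulVec_apply, Matrix.transpose_apply,
      Matrix.trace_fin_two, smul_eq_mul] at hb
    fin_cases i <;> simp [hQdef, hs] at hb ⊢
    exacts [by linear_combination hb - μp * a 0 * hn', by linear_combination hb - μp * a 1 * hn']
  set K : ℝ := 1 + opNorm2 (Gm + vecMulVec a n) + opNorm2 Gm with hK
  have hNp : 0 ≤ opNorm2 (Gm + vecMulVec a n) := opNorm2_nonneg _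
  have hNo : ∀ i j, |Gm i j| ≤ opNorm2 Gm := entry_le_opNorm2 Gm
  have hNo0 : 0 ≤ opNorm2 Gm := opNorm2_nonneg _
  have hK1 : 1 ≤ K := by simp only [hK]; linarith
  have hnb : ∀ i, |n i| ≤ 1 := by
    have h0 : |n 0| ≤ 1 := by nlinarith [sq_abs (n 0), abs_nonneg (n 0), mul_self_nonneg (n 1)]
    have h1 : |n 1| ≤ 1 := by nlinarith [sq_abs (n 1), abs_nonneg (n 1), mul_self_nonneg (n 0)]
    intro i; fin_cases i <;> assumption
  -- bound on Q
  have hQ : ∀ i, |Q i| ≤ 6 * (J * K) := by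
    intro i
    have h1 : |(Gm i 0 + Gm 0 i) * n 0 + (Gm i 1 + Gm 1 i) * n 1| ≤ 4 * opNorm2 Gm := by
      calc |(Gm i 0 + Gm 0 i) * n 0 + (Gm i 1 + Gm 1 i) * n 1|
          ≤ |(Gm i 0 + Gm 0 i) * n 0| + |(Gm i 1 + Gm 1 i) * n 1| := abs_add_le _ _
        _ ≤ (|Gm i 0| + |Gm 0 i|) * 1 + (|Gm i 1| + |Gm 1 i|) * 1 :=
            add_le_add (mul_abs_le (abs_add_le _ _) (hnb 0)) (mul_abs_le (abs_add_le _ _) (hnb 1))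
        _ ≤ 4 * opNorm2 Gm := by
            have := hNo i 0; have := hNo 0 i; have := hNo i 1; have := hNo 1 i; linarith
    have h2 : |(lamp - lamm) * (Gm 0 0 + Gm 1 1) - (Pp - Pm)| ≤ 2 * (J * opNorm2 Gm) + J := by
      calc |(lamp - lamm) * (Gm 0 0 + Gm 1 1) - (Pp - Pm)|
          ≤ |(lamp - lamm) * (Gm 0 0 + Gm 1 1)| + |Pp - Pm| := abs_sub _ _
        _ ≤ J * (2 * opNorm2 Gm) + J := by
            refine add_le_add (mul_abs_le hJl ?_) hJP
            calc |Gm 0 0 + Gm 1 1| ≤ |Gm 0 0| + |Gm 1 1| := abs_add_le _ _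
              _ ≤ 2 * opNorm2 Gm := by have := hNo 0 0; have := hNo 1 1; linarith
        _ = 2 * (J * opNorm2 Gm) + J := by ring
    calc |Q i| ≤ |(μp - μm) * ((Gm i 0 + Gm 0 i) * n 0 + (Gm i 1 + Gm 1 i) * n 1)|
          + |((lamp - lamm) * (Gm 0 0 + Gm 1 1) - (Pp - Pm)) * n i| := abs_add_le _ _
      _ ≤ J * (4 * opNorm2 Gm) + (2 * (J * opNorm2 Gm) + J) * 1 :=
          add_le_add (mul_abs_le hJμ h1)
            (mul_abs_le h2 (hnb i))
      _ ≤ 6 * (J * K) := by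
          simp only [hK]
          nlinarith [mul_nonneg hJ hNp, mul_nonneg hJ hNo0]
  -- the normal component of the jump
  have hμp0 : 0 < μp := lt_of_lt_of_le hμlo hμp
  have hsum : (2 * μp + lamp) * s = -(n 0 * Q 0 + n 1 * Q 1) := by
    linear_combination n 0 * E 0 + n 1 * E 1 - ((μp + lamp) * s) * hn'
  have hnQ : |n 0 * Q 0 + n 1 * Q 1| ≤ 12 * (J * K) := by
    calc |n 0 * Q 0 + n 1 * Q 1| ≤ |n 0 * Q 0| + |n 1 * Q 1| := abs_add_le _ _
      _ ≤ 1 * (6 * (J * K)) + 1 * (6 * (J * K)) :=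
          add_le_add (mul_abs_le (hnb 0) (hQ 0)) (mul_abs_le (hnb 1) (hQ 1))
      _ = 12 * (J * K) := by ring
  have hs1 : (2 * μp + lamp) * |s| ≤ 12 * (J * K) := by
    have : |(2 * μp + lamp) * s| = (2 * μp + lamp) * |s| := by
      rw [abs_mul, abs_of_pos (by linarith)]
    rw [← this, hsum, abs_neg]
    exact hnQ
  have hs2 : (μp + lamp) * |s| ≤ 12 * (J * K) := by
    refine le_trans ?_ hs1
    have := abs_nonneg s
    nlinarith
  -- bound each component of a
  have ha : ∀ i, μlo * |a i| ≤ 18 * (J * K) := by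
    intro i
    have h1 : μp * a i = -((μp + lamp) * s * n i + Q i) := by linear_combination E i
    have h2 : μp * |a i| ≤ 18 * (J * K) := by
      have : |μp * a i| = μp * |a i| := by rw [abs_mul, abs_of_pos hμp0]
      rw [← this, h1, abs_neg]
      calc |(μp + lamp) * s * n i + Q i| ≤ |(μp + lamp) * s * n i| + |Q i| := abs_add_le _ _
        _ ≤ ((μp + lamp) * |s|) * 1 + 6 * (J * K) := by
            refine add_le_add (mul_abs_le ?_ (hnb i)) (hQ i)
            rw [abs_mul, abs_of_pos (by linarith)]
        _ ≤ 18 * (J * K) := by linarith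
    exact le_trans (mul_le_mul_of_nonneg_right hμp (abs_nonneg _)) h2
  -- conclude
  have key : μlo * (|a 0| + |a 1|) ≤ 36 * (J * K) := by
    have h0 := ha 0; have h1 := ha 1; linarith
  calc eNorm2 a ≤ |a 0| + |a 1| := eNorm2_le_abs_add a
    _ ≤ 36 / μlo * J * K := by
        rw [div_mul_eq_mul_div, div_mul_eq_mul_div, le_div_iff₀ hμlo]
        linarith [key]
end

section
/- Let U ⊆ ℝ × ℝ² be open, let ρ : U → (0,∞) and u : U → ℝ² be continuously differentiable and satisfy the mass equation ∂ₜρ + div(ρ u) = 0 pointwise on U. Let P : (0,∞) → ℝ be continuous, fix ρ̃ > 0 and set P̃ := P(ρ̃). For a real number l ≥ 1 define the potential energy H_l(x) := x ∫_{ρ̃}^{x} s^{−2} |P(s) − P̃|^{l−1} (P(s) − P̃) ds for x > 0. Then at every point of U: ∂ₜ(H_l ∘ ρ) + div((H_l ∘ ρ) u) + |P(ρ) − P̃|^{l−1} (P(ρ) − P̃) · div u = 0. -/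
open MeasureTheory

/-- Renormalization of the mass equation by the generalized potential energy
`H_l(x) = x ∫_{ρ̃}^{x} s⁻² |P(s)−P̃|^{l−1}(P(s)−P̃) ds`:
`∂ₜ(H_l∘ρ) + div((H_l∘ρ) u) + |P(ρ)−P̃|^{l−1}(P(ρ)−P̃) div u = 0` on `U`. -/
theorem potential_energy_renormalized_mass_equation
    (U : Set (ℝ × ℝ × ℝ)) (hU : IsOpen U)
    (ρ u1 u2 : ℝ × ℝ × ℝ → ℝ)
    (hρpos : ∀ p ∈ U, 0 < ρ p)
    (hρ : ContDiffOn ℝ 1 ρ U) (hu1 : ContDiffOn ℝ 1 u1 U) (hu2 : ContDiffOn ℝ 1 u2 U)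
    (P : ℝ → ℝ) (hP : ContinuousOn P (Set.Ioi 0))
    (ρtil : ℝ) (hρtil : 0 < ρtil)
    (l : ℝ) (hl : 1 ≤ l)
    (H : ℝ → ℝ)
    (hH : ∀ x, H x = x * ∫ s in ρtil..x, |P s - P ρtil| ^ (l - 1) * (P s - P ρtil) / s ^ 2)
    (hmass : ∀ p ∈ U,
      deriv (fun t => ρ (t, p.2.1, p.2.2)) p.1
        + (deriv (fun x => ρ (p.1, x, p.2.2) * u1 (p.1, x, p.2.2)) p.2.1
          + deriv (fun y => ρ (p.1, p.2.1, y) * u2 (p.1, p.2.1, y)) p.2.2) = 0) :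
    ∀ p ∈ U,
      deriv (fun t => H (ρ (t, p.2.1, p.2.2))) p.1
        + (deriv (fun x => H (ρ (p.1, x, p.2.2)) * u1 (p.1, x, p.2.2)) p.2.1
          + deriv (fun y => H (ρ (p.1, p.2.1, y)) * u2 (p.1, p.2.1, y)) p.2.2)
        + |P (ρ p) - P ρtil| ^ (l - 1) * (P (ρ p) - P ρtil) *
            (deriv (fun x => u1 (p.1, x, p.2.2)) p.2.1
              + deriv (fun y => u2 (p.1, p.2.1, y)) p.2.2) = 0 := by
  have hl' : (0:ℝ) ≤ l - 1 := by linarith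
  set G : ℝ → ℝ := fun s => |P s - P ρtil| ^ (l - 1) * (P s - P ρtil) / s ^ 2 with hGdef
  have hGc : ContinuousOn G (Set.Ioi 0) := by
    apply ContinuousOn.div
    · exact ((hP.sub continuousOn_const).abs.rpow_const
        (fun x hx => Or.inr hl')).mul (hP.sub continuousOn_const)
    · exact (continuous_pow 2).continuousOn
    · intro x hx
      have hx' : (0:ℝ) < x := hx
      positivity
  have hF : ∀ x : ℝ, 0 < x → HasDerivAt (fun y => ∫ s in ρtil..y, G s) (G x) x := by
    intro x hx
    have hsub : Set.uIcc ρtil x ⊆ Set.Ioi 0 := by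
      intro s hs
      exact lt_of_lt_of_le (lt_min hρtil hx) hs.1
    have hint : IntervalIntegrable G volume ρtil x := (hGc.mono hsub).intervalIntegrable
    have hms : StronglyMeasurableAtFilter G (nhds x) :=
      hGc.stronglyMeasurableAtFilter isOpen_Ioi x hx
    exact intervalIntegral.integral_hasDerivAt_right hint hms
      (hGc.continuousAt (isOpen_Ioi.mem_nhds hx))
  rintro ⟨t0, a, b⟩ hp
  dsimp only
  have hρp : 0 < ρ (t0, a, b) := hρpos _ hp
  have hρd : DifferentiableAt ℝ ρ (t0, a, b) :=
    (hρ.contDiffAt (hU.mem_nhds hp)).differentiableAt one_ne_zero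
  have hu1d : DifferentiableAt ℝ u1 (t0, a, b) :=
    (hu1.contDiffAt (hU.mem_nhds hp)).differentiableAt one_ne_zero
  have hu2d : DifferentiableAt ℝ u2 (t0, a, b) :=
    (hu2.contDiffAt (hU.mem_nhds hp)).differentiableAt one_ne_zero
  have het : HasDerivAt (fun t : ℝ => ((t, a, b) : ℝ × ℝ × ℝ)) (1, 0, 0) t0 :=
    HasDerivAt.prodMk (hasDerivAt_id t0) (hasDerivAt_const t0 (a, b))
  have hex : HasDerivAt (fun x : ℝ => ((t0, x, b) : ℝ × ℝ × ℝ)) (0, 1, 0) a :=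
    HasDerivAt.prodMk (hasDerivAt_const a t0) (HasDerivAt.prodMk (hasDerivAt_id a) (hasDerivAt_const a b))
  have hey : HasDerivAt (fun y : ℝ => ((t0, a, y) : ℝ × ℝ × ℝ)) (0, 0, 1) b :=
    HasDerivAt.prodMk (hasDerivAt_const b t0) (HasDerivAt.prodMk (hasDerivAt_const b a) (hasDerivAt_id b))
  have hρt : HasDerivAt (fun t => ρ (t, a, b)) (fderiv ℝ ρ (t0, a, b) (1, 0, 0)) t0 :=
    hρd.hasFDerivAt.comp_hasDerivAt t0 het
  have hρx : HasDerivAt (fun x => ρ (t0, x, b)) (fderiv ℝ ρ (t0, a, b) (0, 1, 0)) a :=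
    hρd.hasFDerivAt.comp_hasDerivAt a hex
  have hρy : HasDerivAt (fun y => ρ (t0, a, y)) (fderiv ℝ ρ (t0, a, b) (0, 0, 1)) b :=
    hρd.hasFDerivAt.comp_hasDerivAt b hey
  have hu1x : HasDerivAt (fun x => u1 (t0, x, b)) (fderiv ℝ u1 (t0, a, b) (0, 1, 0)) a :=
    hu1d.hasFDerivAt.comp_hasDerivAt a hex
  have hu2y : HasDerivAt (fun y => u2 (t0, a, y)) (fderiv ℝ u2 (t0, a, b) (0, 0, 1)) b :=
    hu2d.hasFDerivAt.comp_hasDerivAt b hey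
  have hHd : HasDerivAt H
      ((∫ s in ρtil..ρ (t0, a, b), G s) + ρ (t0, a, b) * G (ρ (t0, a, b))) (ρ (t0, a, b)) := by
    have h1 : HasDerivAt (fun y : ℝ => y * ∫ s in ρtil..y, G s)
        (1 * (∫ s in ρtil..ρ (t0, a, b), G s) + ρ (t0, a, b) * G (ρ (t0, a, b)))
        (ρ (t0, a, b)) := (hasDerivAt_id _).mul (hF _ hρp)
    rw [one_mul] at h1
    exact h1.congr_of_eventuallyEq (Filter.Eventually.of_forall fun y => hH y)
  have hHt : HasDerivAt (fun t => H (ρ (t, a, b)))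
      (((∫ s in ρtil..ρ (t0, a, b), G s) + ρ (t0, a, b) * G (ρ (t0, a, b)))
        * fderiv ℝ ρ (t0, a, b) (1, 0, 0)) t0 := hHd.comp t0 hρt
  have hHx : HasDerivAt (fun x => H (ρ (t0, x, b)) * u1 (t0, x, b))
      ((((∫ s in ρtil..ρ (t0, a, b), G s) + ρ (t0, a, b) * G (ρ (t0, a, b)))
          * fderiv ℝ ρ (t0, a, b) (0, 1, 0)) * u1 (t0, a, b)
        + H (ρ (t0, a, b)) * fderiv ℝ u1 (t0, a, b) (0, 1, 0)) a :=
    (hHd.comp a hρx).mul hu1x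
  have hHy : HasDerivAt (fun y => H (ρ (t0, a, y)) * u2 (t0, a, y))
      ((((∫ s in ρtil..ρ (t0, a, b), G s) + ρ (t0, a, b) * G (ρ (t0, a, b)))
          * fderiv ℝ ρ (t0, a, b) (0, 0, 1)) * u2 (t0, a, b)
        + H (ρ (t0, a, b)) * fderiv ℝ u2 (t0, a, b) (0, 0, 1)) b :=
    (hHd.comp b hρy).mul hu2y
  have hm := hmass (t0, a, b) hp
  dsimp only at hm
  rw [hρt.deriv, (hρx.fun_mul hu1x).deriv, (hρy.fun_mul hu2y).deriv] at hm
  rw [hHt.deriv, hHx.deriv, hHy.deriv, hu1x.deriv, hu2y.deriv, hH (ρ (t0, a, b))]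
  have hQ : |P (ρ (t0, a, b)) - P ρtil| ^ (l - 1) * (P (ρ (t0, a, b)) - P ρtil)
      = ρ (t0, a, b) ^ 2 * G (ρ (t0, a, b)) := by
    rw [hGdef]
    field_simp
  rw [hQ]
  linear_combination
    ((∫ s in ρtil..ρ (t0, a, b), G s) + ρ (t0, a, b) * G (ρ (t0, a, b))) * hm
end

section
/- Let ν > 0 and 0 < r < 3. There exists a constant C, depending only on ν and r, such that for every t > 0, every measurable function h : [0,t] → [0,∞), and every τ ∈ [0,t]: ( ∫₀^{τ} e^{ν (s − τ)} h(s) ds )⁴ ≤ C ∫₀^{t} (min(1,s))^{r} h(s)⁴ ds. -/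
open MeasureTheory Set ENNReal

lemma aux_exp_int (c : ℝ) (hc : 0 < c) (τ : ℝ) :
    ∫⁻ s in Ioc (0:ℝ) τ, ENNReal.ofReal (Real.exp (c*(s-τ))) ≤ ENNReal.ofReal (1/c) := by
  rcases le_or_gt τ 0 with hτ | hτ
  · rw [Ioc_eq_empty (by exact fun hlt => absurd hτ (not_le.mpr hlt))]
    simp
  · have hint : IntegrableOn (fun s => Real.exp (c*(s-τ))) (Ioc (0:ℝ) τ) := by
      apply Continuous.integrableOn_Ioc
      continuity
    rw [← ofReal_integral_eq_lintegral_ofReal hint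
        (Filter.Eventually.of_forall fun s => (Real.exp_pos _).le)]
    apply ENNReal.ofReal_le_ofReal
    have hval : ∫ s in (0:ℝ)..τ, Real.exp (c*(s-τ)) =
        Real.exp (c*(τ-τ))/c - Real.exp (c*(0-τ))/c := by
      apply intervalIntegral.integral_eq_sub_of_hasDerivAt
        (f := fun s => Real.exp (c*(s-τ))/c)
      · intro x _
        have h1 : HasDerivAt (fun s : ℝ => c*(s-τ)) c x := by
          simpa using ((hasDerivAt_id x).sub_const τ).const_mul c
        have h2 := (Real.hasDerivAt_exp (c*(x-τ))).comp x h1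
        have h3 := h2.div_const c
        simpa [mul_div_assoc, mul_comm, mul_div_cancel_left₀ _ hc.ne'] using h3
      · apply Continuous.intervalIntegrable; continuity
    rw [← intervalIntegral.integral_of_le hτ.le]
    rw [hval]
    have : 0 ≤ Real.exp (c*(0-τ))/c := by positivity
    simp only [sub_self, mul_zero, Real.exp_zero]
    linarith

lemma aux_rpow_int (r : ℝ) (hr3 : r < 3) :
    ∫⁻ s in Ioc (0:ℝ) 1, ENNReal.ofReal (s ^ (-(r/3))) ≤ ENNReal.ofReal (1/(1-r/3)) := by
  have hexp : (-1:ℝ) < -(r/3) := by linarith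
  have hint : IntegrableOn (fun s : ℝ => s ^ (-(r/3))) (Ioc (0:ℝ) 1) := by
    have := intervalIntegral.intervalIntegrable_rpow' (a := (0:ℝ)) (b := 1) hexp
    rwa [intervalIntegrable_iff, uIoc_of_le zero_le_one] at this
  have hnn : 0 ≤ᵐ[volume.restrict (Ioc (0:ℝ) 1)] fun s : ℝ => s ^ (-(r/3)) := by
    filter_upwards [ae_restrict_mem measurableSet_Ioc] with s hs
    exact Real.rpow_nonneg hs.1.le _
  rw [← ofReal_integral_eq_lintegral_ofReal hint hnn]
  apply ENNReal.ofReal_le_ofReal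
  rw [← intervalIntegral.integral_of_le zero_le_one]
  rw [integral_rpow (Or.inl hexp)]
  rw [Real.one_rpow, Real.zero_rpow (by linarith)]
  rw [show -(r/3) + 1 = 1 - r/3 by ring]
  simp


lemma aux_measurable_rpow_const (c : ℝ) : Measurable fun x : ℝ => x ^ c := by
  have h : ∀ x : ℝ, x ^ c =
      if x = 0 then (if c = 0 then 1 else 0)
      else Real.exp (Real.log x * c) * (if x < 0 then Real.cos (c * Real.pi) else 1) := by
    intro x
    rcases lt_trichotomy x 0 with hx | hx | hx
    · rw [Real.rpow_def_of_neg hx, if_neg hx.ne, if_pos hx, mul_comm c Real.pi]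
    · subst hx
      by_cases hc : c = 0 <;> simp [hc, Real.zero_rpow]
    · rw [Real.rpow_def_of_pos hx, if_neg hx.ne', if_neg (not_lt.mpr hx.le), mul_one]
  simp only [funext h]
  apply Measurable.ite (measurableSet_eq) measurable_const
  exact ((Real.measurable_log.mul_const c).exp.mul
    (Measurable.ite measurableSet_Iio measurable_const measurable_const))


/-- Uniform-in-time bound on a damped Duhamel integral by a time-weighted `L⁴` norm:
`(∫₀^τ e^{ν(s−τ)} h(s) ds)⁴ ≤ C ∫₀ᵗ σ(s)^r h(s)⁴ ds` with `σ(s) = min(1,s)`, `0 < r < 3`. -/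
theorem duhamel_sup_bound_by_weighted_L4
    (ν r : ℝ) (hν : 0 < ν) (hr0 : 0 < r) (hr3 : r < 3) :
    ∃ C : ℝ≥0∞, C ≠ ⊤ ∧
      ∀ t : ℝ, 0 < t → ∀ h : ℝ → ℝ, Measurable h →
        (∀ s ∈ Icc (0 : ℝ) t, 0 ≤ h s) →
        ∀ τ ∈ Icc (0 : ℝ) t,
          (∫⁻ s in Ioc (0 : ℝ) τ, ENNReal.ofReal (Real.exp (ν * (s - τ)) * h s)) ^ 4
            ≤ C * ∫⁻ s in Ioc (0 : ℝ) t, ENNReal.ofReal ((min 1 s) ^ r * h s ^ 4) := by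
  set c : ℝ := 4/3 * ν with hc_def
  have hc : 0 < c := by positivity
  set K : ℝ := 1/(1-r/3) + 1/c with hK_def
  refine ⟨(ENNReal.ofReal K)^3, ENNReal.pow_ne_top ENNReal.ofReal_ne_top, ?_⟩
  intro t ht h hmeas hnn τ hτ
  obtain ⟨hτ0, hτt⟩ := hτ
  set f : ℝ → ℝ≥0∞ := fun s => ENNReal.ofReal (Real.exp (ν*(s-τ)) * (min 1 s) ^ (-(r/4)))
    with hf_def
  set g : ℝ → ℝ≥0∞ := fun s => ENNReal.ofReal ((min 1 s) ^ (r/4) * h s) with hg_def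
  -- measurability
  have hmin : Measurable fun s : ℝ => min (1:ℝ) s := (continuous_const.min continuous_id).measurable
  have hf : Measurable f := by
    apply Measurable.ennreal_ofReal
    exact ((Real.continuous_exp.comp (by continuity)).measurable).mul ((aux_measurable_rpow_const _).comp hmin)
  have hg : Measurable g := by
    apply Measurable.ennreal_ofReal
    exact ((aux_measurable_rpow_const _).comp hmin).mul hmeas
  -- step 1: rewrite integrand as product
  have eq1 : ∫⁻ s in Ioc (0:ℝ) τ, ENNReal.ofReal (Real.exp (ν * (s - τ)) * h s)
      = ∫⁻ s in Ioc (0:ℝ) τ, (f * g) s := by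
    apply setLIntegral_congr_fun measurableSet_Ioc
    intro s hs
    have hm : 0 < min 1 s := lt_min one_pos hs.1
    have hcancel : (min 1 s) ^ (-(r/4)) * (min 1 s) ^ (r/4) = 1 := by
      rw [← Real.rpow_add hm]; norm_num
    simp only [Pi.mul_apply, hf_def, hg_def]
    rw [← ENNReal.ofReal_mul (by positivity)]
    congr 1
    calc Real.exp (ν*(s-τ)) * h s
        = ((min 1 s) ^ (-(r/4)) * (min 1 s) ^ (r/4)) * (Real.exp (ν*(s-τ)) * h s) := by
          rw [hcancel, one_mul]
      _ = Real.exp (ν*(s-τ)) * (min 1 s) ^ (-(r/4)) * ((min 1 s) ^ (r/4) * h s) := by ring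
  -- Hölder
  have hconj : Real.HolderConjugate (4/3) 4 := ⟨by norm_num, by norm_num, by norm_num⟩
  have holder := ENNReal.lintegral_mul_le_Lp_mul_Lq (volume.restrict (Ioc (0:ℝ) τ)) hconj
    hf.aemeasurable hg.aemeasurable
  set A : ℝ≥0∞ := ∫⁻ s in Ioc (0:ℝ) τ, f s ^ (4/3:ℝ) with hA_def
  set B : ℝ≥0∞ := ∫⁻ s in Ioc (0:ℝ) τ, g s ^ (4:ℝ) with hB_def
  have holder' : (∫⁻ s in Ioc (0:ℝ) τ, (f * g) s) ≤ A ^ (3/4:ℝ) * B ^ (1/4:ℝ) := by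
    convert holder using 2 <;> norm_num
  -- bound on A
  have hAbound : A ≤ ENNReal.ofReal K := by
    have hptwise : ∀ s ∈ Ioc (0:ℝ) τ, f s ^ (4/3:ℝ)
        ≤ ENNReal.ofReal ((Ioc (0:ℝ) 1).indicator (fun u => u ^ (-(r/3))) s
            + Real.exp (c*(s-τ))) := by
      intro s hs
      have hs0 : (0:ℝ) < s := hs.1
      have hm : 0 < min 1 s := lt_min one_pos hs0
      have hx : 0 ≤ Real.exp (ν*(s-τ)) * (min 1 s) ^ (-(r/4)) := by positivity
      simp only [hf_def]
      rw [ENNReal.ofReal_rpow_of_nonneg hx (by norm_num : (0:ℝ) ≤ 4/3)]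
      apply ENNReal.ofReal_le_ofReal
      rcases le_or_gt s 1 with hs1 | hs1
      · have hmin_eq : min 1 s = s := min_eq_right hs1
        have hexp1 : Real.exp (ν*(s-τ)) ≤ 1 := by
          rw [Real.exp_le_one_iff]
          nlinarith [hs.2]
        have hle : Real.exp (ν*(s-τ)) * (min 1 s) ^ (-(r/4)) ≤ s ^ (-(r/4)) := by
          rw [hmin_eq]
          exact mul_le_of_le_one_left (Real.rpow_nonneg hs0.le _) hexp1
        have h2 : (Real.exp (ν*(s-τ)) * (min 1 s) ^ (-(r/4))) ^ (4/3:ℝ)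
            ≤ (s ^ (-(r/4))) ^ (4/3:ℝ) :=
          Real.rpow_le_rpow hx hle (by norm_num)
        have h3 : (s ^ (-(r/4)):ℝ) ^ (4/3:ℝ) = s ^ (-(r/3)) := by
          rw [← Real.rpow_mul hs0.le, show -(r/4)*(4/3) = -(r/3) by ring]
        have hmem1 : s ∈ Ioc (0:ℝ) 1 := ⟨hs0, hs1⟩
        rw [indicator_of_mem hmem1]
        have := (Real.exp_pos (c*(s-τ))).le
        calc (Real.exp (ν*(s-τ)) * (min 1 s) ^ (-(r/4))) ^ (4/3:ℝ)
            ≤ s ^ (-(r/3)) := h3 ▸ h2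
          _ ≤ s ^ (-(r/3)) + Real.exp (c*(s-τ)) := by linarith
      · have hmin_eq : min 1 s = 1 := min_eq_left hs1.le
        rw [indicator_of_notMem (fun hmem => absurd hmem.2 (not_le.mpr hs1))]
        rw [hmin_eq, Real.one_rpow, mul_one, zero_add]
        rw [← Real.exp_mul]
        rw [show ν*(s-τ)*(4/3) = c*(s-τ) by rw [hc_def]; ring]
    calc A ≤ ∫⁻ s in Ioc (0:ℝ) τ,
          ENNReal.ofReal ((Ioc (0:ℝ) 1).indicator (fun u => u ^ (-(r/3))) s
            + Real.exp (c*(s-τ))) := by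
          apply setLIntegral_mono
          · apply Measurable.ennreal_ofReal
            exact ((aux_measurable_rpow_const _).indicator measurableSet_Ioc).add
              (Real.continuous_exp.comp (by continuity)).measurable
          · exact hptwise
      _ = (∫⁻ s in Ioc (0:ℝ) τ,
              ENNReal.ofReal ((Ioc (0:ℝ) 1).indicator (fun u => u ^ (-(r/3))) s))
          + ∫⁻ s in Ioc (0:ℝ) τ, ENNReal.ofReal (Real.exp (c*(s-τ))) := by
          rw [← lintegral_add_left]
          · apply lintegral_congr
            intro s
            rw [← ENNReal.ofReal_add _ (Real.exp_pos _).le]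
            apply indicator_nonneg
            intro u hu
            exact Real.rpow_nonneg hu.1.le _
          · exact Measurable.ennreal_ofReal
              ((aux_measurable_rpow_const _).indicator measurableSet_Ioc)
      _ ≤ ENNReal.ofReal (1/(1-r/3)) + ENNReal.ofReal (1/c) := by
          apply add_le_add
          · calc ∫⁻ s in Ioc (0:ℝ) τ,
                  ENNReal.ofReal ((Ioc (0:ℝ) 1).indicator (fun u => u ^ (-(r/3))) s)
                ≤ ∫⁻ s, ENNReal.ofReal ((Ioc (0:ℝ) 1).indicator (fun u => u ^ (-(r/3))) s) :=
                  setLIntegral_le_lintegral _ _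
              _ = ∫⁻ s in Ioc (0:ℝ) 1, ENNReal.ofReal (s ^ (-(r/3))) := by
                  have hind : (fun s => ENNReal.ofReal
                      ((Ioc (0:ℝ) 1).indicator (fun u => u ^ (-(r/3))) s))
                      = (Ioc (0:ℝ) 1).indicator
                          (fun u => ENNReal.ofReal (u ^ (-(r/3)))) := by
                    ext s
                    by_cases hmem : s ∈ Ioc (0:ℝ) 1
                    · rw [indicator_of_mem hmem, indicator_of_mem hmem]
                    · rw [indicator_of_notMem hmem, indicator_of_notMem hmem,
                        ENNReal.ofReal_zero]
                  rw [hind, lintegral_indicator measurableSet_Ioc]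
              _ ≤ ENNReal.ofReal (1/(1-r/3)) := aux_rpow_int r hr3
          · exact aux_exp_int c hc τ
      _ = ENNReal.ofReal K := by
          rw [← ENNReal.ofReal_add (le_of_lt (div_pos one_pos (by linarith))) (by positivity)]
  -- bound on B
  have hBbound : B ≤ ∫⁻ s in Ioc (0:ℝ) t, ENNReal.ofReal ((min 1 s) ^ r * h s ^ 4) := by
    have eqB : B = ∫⁻ s in Ioc (0:ℝ) τ, ENNReal.ofReal ((min 1 s) ^ r * h s ^ 4) := by
      apply setLIntegral_congr_fun measurableSet_Ioc
      intro s hs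
      have hs0 : (0:ℝ) < s := hs.1
      have hm : (0:ℝ) ≤ min 1 s := (lt_min one_pos hs0).le
      have hhs : 0 ≤ h s := hnn s ⟨hs0.le, hs.2.trans hτt⟩
      simp only [hg_def]
      rw [ENNReal.ofReal_rpow_of_nonneg (by positivity) (by norm_num : (0:ℝ) ≤ 4)]
      congr 1
      calc ((min 1 s) ^ (r/4) * h s) ^ (4:ℝ)
          = ((min 1 s) ^ (r/4) * h s) ^ (4:ℕ) := by
            rw [show (4:ℝ) = ((4:ℕ):ℝ) by norm_num, Real.rpow_natCast]
        _ = ((min 1 s) ^ (r/4)) ^ (4:ℕ) * h s ^ (4:ℕ) := mul_pow _ _ _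
        _ = (min 1 s) ^ r * h s ^ 4 := by
            rw [← Real.rpow_natCast ((min 1 s) ^ (r/4)) 4, ← Real.rpow_mul hm]
            norm_num
    rw [eqB]
    exact lintegral_mono_set (Ioc_subset_Ioc_right hτt)
  -- combine
  rw [eq1]
  have e1 : ∀ (X : ℝ≥0∞) (a : ℝ), (X ^ a) ^ (4:ℕ) = X ^ (a*4) := by
    intro X a
    rw [← ENNReal.rpow_natCast (X ^ a) 4, ← ENNReal.rpow_mul]
    norm_num
  calc (∫⁻ s in Ioc (0:ℝ) τ, (f * g) s) ^ 4
      ≤ (A ^ (3/4:ℝ) * B ^ (1/4:ℝ)) ^ 4 := pow_le_pow_left' holder' 4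
    _ = A ^ 3 * B := by
        rw [mul_pow, e1, e1]
        norm_num
    _ ≤ (ENNReal.ofReal K) ^ 3 * ∫⁻ s in Ioc (0:ℝ) t,
          ENNReal.ofReal ((min 1 s) ^ r * h s ^ 4) :=
        mul_le_mul' (pow_le_pow_left' hAbound 3) hBbound
end

section
/- Let ν > 0 and 0 < r < 3. There exists a constant C, depending only on ν and r, such that for every t > 0 and every measurable function h : [0,t] → [0,∞): ∫₀^{t} ( ∫₀^{τ} e^{ν (s − τ)} h(s) ds )⁴ dτ ≤ C ∫₀^{t} (min(1,s))^{r} h(s)⁴ ds. -/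
open MeasureTheory Set ENNReal

private lemma exp_lint_Ioc {ν : ℝ} (hν : 0 < ν) (a b : ℝ) :
    ∫⁻ x in Ioc a b, ENNReal.ofReal (Real.exp (ν * (x - b))) ≤ ENNReal.ofReal ν⁻¹ := by
  rcases le_or_gt b a with hba | hab
  · rw [Ioc_eq_empty (by exact fun h => absurd hba (not_le.mpr h))]
    simp
  · have hcont : Continuous fun x : ℝ => Real.exp (ν * (x - b)) := by continuity
    have hint : IntegrableOn (fun x => Real.exp (ν * (x - b))) (Ioc a b) volume :=
      hcont.integrableOn_Ioc
    rw [← ofReal_integral_eq_lintegral_ofReal hint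
        (Filter.Eventually.of_forall fun x => (Real.exp_pos _).le)]
    apply ENNReal.ofReal_le_ofReal
    rw [← intervalIntegral.integral_of_le hab.le]
    have hderiv : ∀ x ∈ uIcc a b,
        HasDerivAt (fun x => Real.exp (ν * (x - b)) / ν) (Real.exp (ν * (x - b))) x := by
      intro x _
      have h1 : HasDerivAt (fun x : ℝ => ν * (x - b)) ν x := by
        simpa using ((hasDerivAt_id x).sub_const b).const_mul ν
      have h2 := (Real.hasDerivAt_exp (ν * (x - b))).comp x h1
      have h3 := h2.div_const ν
      simpa [mul_comm, mul_div_assoc, ne_of_gt hν] using h3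
    rw [intervalIntegral.integral_eq_sub_of_hasDerivAt hderiv (hcont.intervalIntegrable a b)]
    have he : (0:ℝ) ≤ Real.exp (ν * (a - b)) := (Real.exp_pos _).le
    have h1 : Real.exp (ν * (b - b)) = 1 := by simp
    rw [h1, div_sub_div_same, inv_eq_one_div]
    gcongr
    linarith

private lemma exp_lint_Icc {ν : ℝ} (hν : 0 < ν) (a b : ℝ) :
    ∫⁻ x in Icc a b, ENNReal.ofReal (Real.exp (ν * (a - x))) ≤ ENNReal.ofReal ν⁻¹ := by
  rw [← setLIntegral_congr (Ioc_ae_eq_Icc (μ := volume) (a := a) (b := b))]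
  rcases le_or_gt b a with hba | hab
  · rw [Ioc_eq_empty (by exact fun h => absurd hba (not_le.mpr h))]
    simp
  · have hcont : Continuous fun x : ℝ => Real.exp (ν * (a - x)) := by continuity
    have hint : IntegrableOn (fun x => Real.exp (ν * (a - x))) (Ioc a b) volume :=
      hcont.integrableOn_Ioc
    rw [← ofReal_integral_eq_lintegral_ofReal hint
        (Filter.Eventually.of_forall fun x => (Real.exp_pos _).le)]
    apply ENNReal.ofReal_le_ofReal
    rw [← intervalIntegral.integral_of_le hab.le]
    have hderiv : ∀ x ∈ uIcc a b,
        HasDerivAt (fun x => -(Real.exp (ν * (a - x)) / ν)) (Real.exp (ν * (a - x))) x := by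
      intro x _
      have h1 : HasDerivAt (fun x : ℝ => ν * (a - x)) (-ν) x := by
        simpa using ((hasDerivAt_id x).const_sub a).const_mul ν
      have h2 := (Real.hasDerivAt_exp (ν * (a - x))).comp x h1
      have h3 := (h2.div_const ν).neg
      have hne : ν ≠ 0 := ne_of_gt hν
      field_simp at h3 ⊢; exact h3
    rw [intervalIntegral.integral_eq_sub_of_hasDerivAt hderiv (hcont.intervalIntegrable a b)]
    have he : (0:ℝ) ≤ Real.exp (ν * (a - b)) := (Real.exp_pos _).le
    have h1 : Real.exp (ν * (a - a)) = 1 := by simp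
    rw [h1, inv_eq_one_div]
    have hd : 0 ≤ Real.exp (ν * (a - b)) / ν := div_nonneg he hν.le
    linarith

private lemma rpow_lint_Ioc01 {r : ℝ} (hr0 : 0 < r) (hr3 : r < 3) :
    ∫⁻ s in Ioc (0:ℝ) 1, ENNReal.ofReal (s ^ (-(r/3))) ≤ ENNReal.ofReal (1/(1-r/3)) := by
  have hexp : (-1:ℝ) < -(r/3) := by linarith
  have hii : IntervalIntegrable (fun x : ℝ => x ^ (-(r/3))) volume 0 1 :=
    intervalIntegral.intervalIntegrable_rpow' hexp
  have hint : IntegrableOn (fun x : ℝ => x ^ (-(r/3))) (Ioc 0 1) volume :=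
    (intervalIntegrable_iff_integrableOn_Ioc_of_le (by norm_num)).mp hii
  have hnn : 0 ≤ᵐ[volume.restrict (Ioc (0:ℝ) 1)] fun x : ℝ => x ^ (-(r/3)) := by
    refine ae_restrict_of_forall_mem measurableSet_Ioc fun x hx => ?_
    exact Real.rpow_nonneg hx.1.le _
  rw [← ofReal_integral_eq_lintegral_ofReal hint hnn]
  apply ENNReal.ofReal_le_ofReal
  rw [← intervalIntegral.integral_of_le (by norm_num : (0:ℝ) ≤ 1)]
  rw [integral_rpow (Or.inl hexp)]
  have h1 : -(r/3) + 1 = 1 - r/3 := by ring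
  rw [h1, Real.one_rpow, Real.zero_rpow (by linarith)]
  norm_num

private lemma weight_lint {ν r : ℝ} (hν : 0 < ν) (hr0 : 0 < r) (hr3 : r < 3) (b : ℝ) :
    ∫⁻ s in Ioc 0 b,
        ENNReal.ofReal (Real.exp (ν * (s - b))) * ENNReal.ofReal (min 1 s) ^ (-(r/3))
      ≤ ENNReal.ofReal (1/(1-r/3)) + ENNReal.ofReal ν⁻¹ := by
  rcases le_or_gt b 0 with hb | hb
  · rw [Ioc_eq_empty (not_lt.mpr hb)]
    simp
  · have hm0 : 0 < min 1 b := lt_min one_pos hb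
    have hmb : min 1 b ≤ b := min_le_right _ _
    have hsplit : Ioc (0:ℝ) b = Ioc 0 (min 1 b) ∪ Ioc (min 1 b) b :=
      (Ioc_union_Ioc_eq_Ioc hm0.le hmb).symm
    rw [hsplit, lintegral_union measurableSet_Ioc (Ioc_disjoint_Ioc_of_le le_rfl)]
    have hpiece1 : ∫⁻ s in Ioc (0:ℝ) (min 1 b),
        ENNReal.ofReal (Real.exp (ν * (s - b))) * ENNReal.ofReal (min 1 s) ^ (-(r/3))
        ≤ ENNReal.ofReal (1/(1-r/3)) := by
      refine le_trans ?_ (le_trans (lintegral_mono_set (Ioc_subset_Ioc_right (min_le_left 1 b)))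
        (rpow_lint_Ioc01 hr0 hr3))
      refine setLIntegral_mono' measurableSet_Ioc fun s hs => ?_
      have hs0 : 0 < s := hs.1
      have hs1 : s ≤ 1 := le_trans hs.2 (min_le_left _ _)
      have hsb : s ≤ b := le_trans hs.2 hmb
      have hmin : min 1 s = s := min_eq_right hs1
      rw [hmin, ENNReal.ofReal_rpow_of_pos hs0]
      calc ENNReal.ofReal (Real.exp (ν * (s - b))) * ENNReal.ofReal (s ^ (-(r/3)))
          ≤ 1 * ENNReal.ofReal (s ^ (-(r/3))) := by
            gcongr
            exact ENNReal.ofReal_le_one.mpr (Real.exp_le_one_iff.mpr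
              (mul_nonpos_of_nonneg_of_nonpos hν.le (by linarith)))
        _ = ENNReal.ofReal (s ^ (-(r/3))) := one_mul _
    have hpiece2 : ∫⁻ s in Ioc (min 1 b) b,
        ENNReal.ofReal (Real.exp (ν * (s - b))) * ENNReal.ofReal (min 1 s) ^ (-(r/3))
        ≤ ENNReal.ofReal ν⁻¹ := by
      refine le_trans ?_ (exp_lint_Ioc hν (min 1 b) b)
      refine setLIntegral_mono' measurableSet_Ioc fun s hs => ?_
      have h1s : 1 ≤ s := by
        rcases le_or_gt b 1 with hb1 | hb1
        · have hmb' : min 1 b = b := min_eq_right hb1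
          rw [hmb'] at hs
          exact absurd hs.2 (not_le.mpr hs.1)
        · have : min 1 b = 1 := min_eq_left hb1.le
          rw [this] at hs
          exact hs.1.le
      have hmin : min 1 s = 1 := min_eq_left h1s
      rw [hmin]
      simp
    exact add_le_add hpiece1 hpiece2

private lemma holder_step {ν r : ℝ} (hν : 0 < ν) (hr0 : 0 < r) (hr3 : r < 3)
    (τ : ℝ) (H : ℝ → ℝ≥0∞) (hH : Measurable H) :
    (∫⁻ s in Ioc (0:ℝ) τ, ENNReal.ofReal (Real.exp (ν * (s - τ))) * H s) ^ 4
      ≤ (ENNReal.ofReal (1/(1-r/3)) + ENNReal.ofReal ν⁻¹) ^ 3 *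
        ∫⁻ s in Ioc (0:ℝ) τ, ENNReal.ofReal (Real.exp (ν * (s - τ))) *
          (ENNReal.ofReal (min 1 s) ^ r * H s ^ 4) := by
  set E : ℝ → ℝ≥0∞ := fun s => ENNReal.ofReal (Real.exp (ν * (s - τ))) with hE
  set W : ℝ → ℝ≥0∞ := fun s => ENNReal.ofReal (min 1 s) with hW
  set A : ℝ≥0∞ := ENNReal.ofReal (1/(1-r/3)) + ENNReal.ofReal ν⁻¹ with hA
  set f : ℝ → ℝ≥0∞ := fun s => E s ^ (3/4 : ℝ) * W s ^ (-(r/4)) with hf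
  set g : ℝ → ℝ≥0∞ := fun s => E s ^ (1/4 : ℝ) * (W s ^ (r/4) * H s) with hg
  have hEm : Measurable E := by
    apply ENNReal.measurable_ofReal.comp
    exact (Real.continuous_exp.comp (by continuity)).measurable
  have hWm : Measurable W := by
    apply ENNReal.measurable_ofReal.comp
    exact (continuous_const.min continuous_id).measurable
  have hfm : Measurable f := (hEm.pow_const _).mul (hWm.pow_const _)
  have hgm : Measurable g := (hEm.pow_const _).mul ((hWm.pow_const _).mul hH)
  -- step 1: rewrite integrand as product f * g on the set
  have hstep1 : ∫⁻ s in Ioc (0:ℝ) τ, E s * H s = ∫⁻ s in Ioc (0:ℝ) τ, (f * g) s := by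
    refine setLIntegral_congr_fun measurableSet_Ioc (fun s hs => ?_)
    have hW0 : W s ≠ 0 := by
      simp only [hW, ne_eq, ENNReal.ofReal_eq_zero, not_le]
      exact lt_min one_pos hs.1
    have hWt : W s ≠ ⊤ := ENNReal.ofReal_ne_top
    have hE0 : E s ≠ 0 := by
      simp only [hE, ne_eq, ENNReal.ofReal_eq_zero, not_le]
      exact Real.exp_pos _
    have hEt : E s ≠ ⊤ := ENNReal.ofReal_ne_top
    have : (f * g) s = (E s ^ (3/4:ℝ) * E s ^ (1/4:ℝ)) *
        ((W s ^ (-(r/4)) * W s ^ (r/4)) * H s) := by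
      simp only [Pi.mul_apply, hf, hg]; ring
    rw [this, ← ENNReal.rpow_add _ _ hE0 hEt, ← ENNReal.rpow_add _ _ hW0 hWt]
    norm_num
  -- step 2: Hölder
  have hpq : (4/3 : ℝ).HolderConjugate 4 := Real.holderConjugate_iff.mpr ⟨by norm_num, by norm_num⟩
  have hholder := ENNReal.lintegral_mul_le_Lp_mul_Lq (volume.restrict (Ioc (0:ℝ) τ)) hpq
    hfm.aemeasurable hgm.aemeasurable
  -- step 3: compute ∫ f^(4/3)
  have hf43 : ∀ s, f s ^ (4/3 : ℝ) = E s * W s ^ (-(r/3)) := by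
    intro s
    rw [hf]
    rw [ENNReal.mul_rpow_of_nonneg _ _ (by norm_num : (0:ℝ) ≤ 4/3)]
    rw [← ENNReal.rpow_mul, ← ENNReal.rpow_mul]
    norm_num
    ring_nf
  have hFf : (∫⁻ s in Ioc (0:ℝ) τ, f s ^ (4/3:ℝ)) ≤ A := by
    calc (∫⁻ s in Ioc (0:ℝ) τ, f s ^ (4/3:ℝ))
        = ∫⁻ s in Ioc (0:ℝ) τ, E s * W s ^ (-(r/3)) := by
          exact lintegral_congr fun s => by rw [hf43]
      _ ≤ A := weight_lint hν hr0 hr3 τ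
  -- step 4: compute ∫ g^4
  have hg4 : ∀ s, g s ^ (4:ℝ) = E s * (W s ^ r * H s ^ 4) := by
    intro s
    rw [hg]
    rw [ENNReal.mul_rpow_of_nonneg _ _ (by norm_num : (0:ℝ) ≤ 4)]
    rw [ENNReal.mul_rpow_of_nonneg _ _ (by norm_num : (0:ℝ) ≤ 4)]
    rw [← ENNReal.rpow_mul, ← ENNReal.rpow_mul]
    norm_num
  have hZ : (∫⁻ s in Ioc (0:ℝ) τ, g s ^ (4:ℝ))
      = ∫⁻ s in Ioc (0:ℝ) τ, E s * (W s ^ r * H s ^ 4) :=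
    lintegral_congr fun s => by rw [hg4]
  -- combine
  set Z : ℝ≥0∞ := ∫⁻ s in Ioc (0:ℝ) τ, E s * (W s ^ r * H s ^ 4) with hZdef
  have hle : (∫⁻ s in Ioc (0:ℝ) τ, E s * H s) ≤ A ^ (3/4:ℝ) * Z ^ (1/4:ℝ) := by
    rw [hstep1]
    refine le_trans hholder ?_
    have h34 : (1 : ℝ) / (4/3) = 3/4 := by norm_num
    rw [h34, hZ]
    exact mul_le_mul_left (ENNReal.rpow_le_rpow hFf (by norm_num)) _
  calc (∫⁻ s in Ioc (0:ℝ) τ, E s * H s) ^ 4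
      ≤ (A ^ (3/4:ℝ) * Z ^ (1/4:ℝ)) ^ 4 := by gcongr
    _ = A ^ 3 * Z := by
        rw [mul_pow, ← ENNReal.rpow_natCast (A ^ (3/4:ℝ)) 4,
          ← ENNReal.rpow_natCast (Z ^ (1/4:ℝ)) 4, ← ENNReal.rpow_mul, ← ENNReal.rpow_mul]
        norm_num


/-- `L⁴`-in-time bound on the damped Duhamel integral by a time-weighted `L⁴` norm:
`∫₀ᵗ (∫₀^τ e^{ν(s−τ)} h(s) ds)⁴ dτ ≤ C ∫₀ᵗ σ(s)^r h(s)⁴ ds`, `σ(s) = min(1,s)`, `0 < r < 3`. -/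
theorem duhamel_L4_bound_by_weighted_L4
    (ν r : ℝ) (hν : 0 < ν) (hr0 : 0 < r) (hr3 : r < 3) :
    ∃ C : ℝ≥0∞, C ≠ ⊤ ∧
      ∀ t : ℝ, 0 < t → ∀ h : ℝ → ℝ, Measurable h →
        (∀ s ∈ Icc (0 : ℝ) t, 0 ≤ h s) →
        (∫⁻ τ in Ioc (0 : ℝ) t,
            (∫⁻ s in Ioc (0 : ℝ) τ, ENNReal.ofReal (Real.exp (ν * (s - τ)) * h s)) ^ 4)
          ≤ C * ∫⁻ s in Ioc (0 : ℝ) t, ENNReal.ofReal ((min 1 s) ^ r * h s ^ 4) := by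
  set A : ℝ≥0∞ := ENNReal.ofReal (1/(1-r/3)) + ENNReal.ofReal ν⁻¹ with hA
  have hAt : A ≠ ⊤ := by
    rw [hA]
    exact ENNReal.add_ne_top.mpr ⟨ENNReal.ofReal_ne_top, ENNReal.ofReal_ne_top⟩
  have hA3t : A ^ 3 ≠ ⊤ := ENNReal.pow_ne_top hAt
  refine ⟨A ^ 3 * ENNReal.ofReal ν⁻¹, ENNReal.mul_ne_top hA3t ENNReal.ofReal_ne_top, ?_⟩
  intro t ht h hmeas hnn
  set H : ℝ → ℝ≥0∞ := fun s => ENNReal.ofReal (h s) with hHdef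
  have hHm : Measurable H := ENNReal.measurable_ofReal.comp hmeas
  set K : ℝ → ℝ≥0∞ := fun s => ENNReal.ofReal (min 1 s) ^ r * H s ^ 4 with hK
  have hKm : Measurable K := by
    apply Measurable.mul
    · exact (ENNReal.measurable_ofReal.comp
        (continuous_const.min continuous_id).measurable).pow_const _
    · exact hHm.pow_const _
  have hKt : ∀ s, K s ≠ ⊤ := by
    intro s
    exact ENNReal.mul_ne_top (ENNReal.rpow_ne_top_of_nonneg hr0.le ENNReal.ofReal_ne_top)
      (ENNReal.pow_ne_top ENNReal.ofReal_ne_top)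
  -- Step A: rewrite the inner integral
  have hinner : ∀ τ : ℝ, (∫⁻ s in Ioc (0:ℝ) τ, ENNReal.ofReal (Real.exp (ν * (s - τ)) * h s))
      = ∫⁻ s in Ioc (0:ℝ) τ, ENNReal.ofReal (Real.exp (ν * (s - τ))) * H s :=
    fun τ => lintegral_congr fun s => ENNReal.ofReal_mul (Real.exp_pos _).le
  -- Step B: Hölder pointwise in τ
  have hB : (∫⁻ τ in Ioc (0:ℝ) t,
        (∫⁻ s in Ioc (0:ℝ) τ, ENNReal.ofReal (Real.exp (ν * (s - τ))) * H s) ^ 4)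
      ≤ A ^ 3 * ∫⁻ τ in Ioc (0:ℝ) t,
          ∫⁻ s in Ioc (0:ℝ) τ, ENNReal.ofReal (Real.exp (ν * (s - τ))) * K s := by
    rw [← lintegral_const_mul' _ _ hA3t]
    refine setLIntegral_mono' measurableSet_Ioc fun τ _ => ?_
    have := holder_step hν hr0 hr3 τ H hHm
    refine le_trans this (le_of_eq ?_)
    congr 1
  -- Step C: Fubini
  set G : ℝ × ℝ → ℝ≥0∞ :=
    fun p => ENNReal.ofReal (Real.exp (ν * (p.2 - p.1))) * K p.2 with hG
  set S : Set (ℝ × ℝ) := {p | (0 < p.1 ∧ p.1 ≤ t) ∧ 0 < p.2 ∧ p.2 ≤ p.1} with hSdef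
  have hSm : MeasurableSet S := by
    exact (((measurableSet_lt measurable_const measurable_fst).inter
        (measurableSet_le measurable_fst measurable_const)).inter
      ((measurableSet_lt measurable_const measurable_snd).inter
        (measurableSet_le measurable_snd measurable_fst)))
  have hGm : Measurable G := by
    apply Measurable.mul
    · exact ENNReal.measurable_ofReal.comp
        (Real.continuous_exp.comp (by continuity)).measurable
    · exact hKm.comp measurable_snd
  have hΘm : Measurable (S.indicator G) := hGm.indicator hSm
  have hC : (∫⁻ τ in Ioc (0:ℝ) t,
        ∫⁻ s in Ioc (0:ℝ) τ, ENNReal.ofReal (Real.exp (ν * (s - τ))) * K s)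
      ≤ ENNReal.ofReal ν⁻¹ * ∫⁻ s in Ioc (0:ℝ) t, K s := by
    calc (∫⁻ τ in Ioc (0:ℝ) t,
          ∫⁻ s in Ioc (0:ℝ) τ, ENNReal.ofReal (Real.exp (ν * (s - τ))) * K s)
        = ∫⁻ τ in Ioc (0:ℝ) t, ∫⁻ s, S.indicator G (τ, s) := by
          refine setLIntegral_congr_fun measurableSet_Ioc
            (fun τ hτ => ?_)
          rw [← lintegral_indicator measurableSet_Ioc]
          refine lintegral_congr fun s => ?_
          by_cases hs : s ∈ Ioc (0:ℝ) τ
          · rw [indicator_of_mem hs, indicator_of_mem]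
            exact ⟨⟨hτ.1, hτ.2⟩, hs.1, hs.2⟩
          · rw [indicator_of_notMem hs, indicator_of_notMem]
            intro hmem
            exact hs ⟨hmem.2.1, hmem.2.2⟩
      _ ≤ ∫⁻ τ, ∫⁻ s, S.indicator G (τ, s) := setLIntegral_le_lintegral _ _
      _ = ∫⁻ s, ∫⁻ τ, S.indicator G (τ, s) := lintegral_lintegral_swap hΘm.aemeasurable
      _ ≤ ∫⁻ s, (Ioc (0:ℝ) t).indicator (fun s => ENNReal.ofReal ν⁻¹ * K s) s := by
          refine lintegral_mono fun s => ?_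
          by_cases hs : s ∈ Ioc (0:ℝ) t
          · rw [indicator_of_mem hs]
            have heq : ∀ τ, S.indicator G (τ, s) = (Icc s t).indicator
                (fun τ => ENNReal.ofReal (Real.exp (ν * (s - τ))) * K s) τ := by
              intro τ
              by_cases hτ : τ ∈ Icc s t
              · rw [indicator_of_mem hτ, indicator_of_mem]
                exact ⟨⟨lt_of_lt_of_le hs.1 hτ.1, hτ.2⟩, hs.1, hτ.1⟩
              · rw [indicator_of_notMem hτ, indicator_of_notMem]
                intro hmem
                exact hτ ⟨hmem.2.2, hmem.1.2⟩
            calc (∫⁻ τ, S.indicator G (τ, s))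
                = ∫⁻ τ in Icc s t, ENNReal.ofReal (Real.exp (ν * (s - τ))) * K s := by
                  rw [← lintegral_indicator measurableSet_Icc]
                  exact lintegral_congr heq
              _ = (∫⁻ τ in Icc s t, ENNReal.ofReal (Real.exp (ν * (s - τ)))) * K s :=
                  lintegral_mul_const _ (ENNReal.measurable_ofReal.comp
                    (Real.continuous_exp.comp (by continuity)).measurable)
              _ ≤ ENNReal.ofReal ν⁻¹ * K s := mul_le_mul_left (exp_lint_Icc hν s t) _
          · rw [indicator_of_notMem hs]
            have hz : ∀ τ, S.indicator G (τ, s) = 0 := by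
              intro τ
              rw [indicator_of_notMem]
              intro hmem
              exact hs ⟨hmem.2.1, le_trans hmem.2.2 hmem.1.2⟩
            simp [hz]
      _ = ENNReal.ofReal ν⁻¹ * ∫⁻ s in Ioc (0:ℝ) t, K s := by
          rw [lintegral_indicator measurableSet_Ioc, lintegral_const_mul' _ _
            ENNReal.ofReal_ne_top]
  -- Step D: rewrite the RHS
  have hRHS : (∫⁻ s in Ioc (0:ℝ) t, ENNReal.ofReal ((min 1 s) ^ r * h s ^ 4))
      = ∫⁻ s in Ioc (0:ℝ) t, K s := by
    refine setLIntegral_congr_fun measurableSet_Ioc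
      (fun s hs => ?_)
    have h0 : 0 < min 1 s := lt_min one_pos hs.1
    have hh : 0 ≤ h s := hnn s ⟨hs.1.le, hs.2⟩
    rw [ENNReal.ofReal_mul (Real.rpow_nonneg h0.le _), ← ENNReal.ofReal_rpow_of_pos h0,
      ENNReal.ofReal_pow hh]
  calc (∫⁻ τ in Ioc (0:ℝ) t,
        (∫⁻ s in Ioc (0:ℝ) τ, ENNReal.ofReal (Real.exp (ν * (s - τ)) * h s)) ^ 4)
      = ∫⁻ τ in Ioc (0:ℝ) t,
        (∫⁻ s in Ioc (0:ℝ) τ, ENNReal.ofReal (Real.exp (ν * (s - τ))) * H s) ^ 4 :=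
        lintegral_congr fun τ => by rw [hinner]
    _ ≤ A ^ 3 * ∫⁻ τ in Ioc (0:ℝ) t,
          ∫⁻ s in Ioc (0:ℝ) τ, ENNReal.ofReal (Real.exp (ν * (s - τ))) * K s := hB
    _ ≤ A ^ 3 * (ENNReal.ofReal ν⁻¹ * ∫⁻ s in Ioc (0:ℝ) t, K s) := mul_le_mul_right hC _
    _ = (A ^ 3 * ENNReal.ofReal ν⁻¹) * ∫⁻ s in Ioc (0:ℝ) t, K s := (mul_assoc _ _ _).symm
    _ = (A ^ 3 * ENNReal.ofReal ν⁻¹) *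
          ∫⁻ s in Ioc (0:ℝ) t, ENNReal.ofReal ((min 1 s) ^ r * h s ^ 4) := by rw [hRHS]
end
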